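/- Let k be an algebraically closed field and n ≥ 3. Let e = Σ_{j=2}^{n-1} E_{j,j+1} and let B be the group of upper triangular n×n matrices over k of determinant 1. Then the conjugation orbit { g·e·g^{-1} : g ∈ B } equals the set of all strictly upper triangular n×n matrices x with x_{1,2} = 0 and x_{j,j+1} ≠ 0 for all j with 2 ≤ j ≤ n−1 (the entries x_{a,b} with b ≥ a+2 being arbitrary). -/

import Mathlib

open Matrix

/-- The elementary `n × n` matrix `E a b` (indices `1, …, n`) whose `(a, b)` entry is `1`
and all of whose other entries are `0`. -/
def Emat (n : ℕ) (k : Type*) [Field k] (a b : ℕ) : Matrix (Fin n) (Fin n) k :=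
  Matrix.of fun p q => if (p : ℕ) + 1 = a ∧ (q : ℕ) + 1 = b then 1 else 0

/-- A matrix is upper triangular. -/
def IsUpperTri {n : ℕ} {k : Type*} [Field k] (g : Matrix (Fin n) (Fin n) k) : Prop :=
  ∀ a b : Fin n, (b : ℕ) < (a : ℕ) → g a b = 0

/-- A matrix is strictly upper triangular. -/
def IsStrictUpperTri {n : ℕ} {k : Type*} [Field k] (x : Matrix (Fin n) (Fin n) k) : Prop :=
  ∀ a b : Fin n, (b : ℕ) ≤ (a : ℕ) → x a b = 0

/-- The orbit of `e` under conjugation by the group `B` of upper triangular matrices of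
determinant `1`. -/
def Borbit {n : ℕ} {k : Type*} [Field k] (e : Matrix (Fin n) (Fin n) k) :
    Set (Matrix (Fin n) (Fin n) k) :=
  { x | ∃ g : Matrix (Fin n) (Fin n) k, IsUpperTri g ∧ g.det = 1 ∧ x = g * e * g⁻¹ }

lemma e_entry {k : Type*} [Field k] {n : ℕ} (hn : 3 ≤ n)
    (e : Matrix (Fin n) (Fin n) k)
    (he : e = ∑ j ∈ Finset.Icc 2 (n - 1), Emat n k j (j + 1)) (p q : Fin n) :
    e p q = if 1 ≤ (p : ℕ) ∧ (p : ℕ) ≤ n - 2 ∧ (q : ℕ) = (p : ℕ) + 1 then 1 else 0 := by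
  subst he
  classical
  rw [Matrix.sum_apply]
  have h1 : ∀ a ∈ Finset.Icc 2 (n - 1),
      (Emat n k a (a + 1)) p q = if a = (p : ℕ) + 1 then (if (q : ℕ) = (p : ℕ) + 1 then (1:k) else 0) else 0 := by
    intro a _
    simp only [Emat, Matrix.of_apply]
    split_ifs <;> first | rfl | omega
  rw [Finset.sum_congr rfl h1, Finset.sum_ite_eq' (Finset.Icc 2 (n-1)) ((p:ℕ)+1)]
  have hq : (q : ℕ) < n := q.isLt
  simp only [Finset.mem_Icc]
  split_ifs <;> first | rfl | omega

lemma mul_e_entry {k : Type*} [Field k] {n : ℕ} (hn : 3 ≤ n)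
    (e : Matrix (Fin n) (Fin n) k)
    (he : e = ∑ j ∈ Finset.Icc 2 (n - 1), Emat n k j (j + 1))
    (g : Matrix (Fin n) (Fin n) k) (a j : Fin n) :
    (g * e) a j = if h : 2 ≤ (j : ℕ) then g a ⟨(j : ℕ) - 1, by omega⟩ else 0 := by
  classical
  rw [Matrix.mul_apply]
  by_cases h2 : 2 ≤ (j : ℕ)
  · rw [dif_pos h2]
    have hj : (j : ℕ) < n := j.isLt
    have h1 : ∀ i : Fin n, g a i * e i j =
        if i = (⟨(j : ℕ) - 1, by omega⟩ : Fin n) then g a i else 0 := by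
      intro i
      rw [e_entry hn e he]
      split_ifs with h h' h'
      · ring
      · exfalso; apply h'; apply Fin.ext; simp; omega
      · exfalso
        rw [Fin.ext_iff] at h'
        simp at h'
        omega
      · ring
    rw [Finset.sum_congr rfl (fun i _ => h1 i), Finset.sum_ite_eq' Finset.univ]
    simp
  · rw [dif_neg h2]
    apply Finset.sum_eq_zero
    intro i _
    rw [e_entry hn e he]
    rw [if_neg (by omega)]
    ring

lemma pow_entry_zero {k : Type*} [Field k] {n : ℕ}
    {x : Matrix (Fin n) (Fin n) k} (hx : IsStrictUpperTri x) :
    ∀ m : ℕ, ∀ a b : Fin n, (b : ℕ) < (a : ℕ) + m → (x ^ m) a b = 0 := by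
  intro m
  induction m with
  | zero =>
    intro a b hb
    simp only [pow_zero]
    exact Matrix.one_apply_ne (by intro h; subst h; omega)
  | succ m ih =>
    intro a b hb
    rw [pow_succ, Matrix.mul_apply]
    apply Finset.sum_eq_zero
    intro i _
    by_cases hi : (i : ℕ) < (a : ℕ) + m
    · rw [ih a i hi, zero_mul]
    · rw [hx i b (by omega), mul_zero]

lemma pow_superdiag_ne_zero {k : Type*} [Field k] {n : ℕ}
    {x : Matrix (Fin n) (Fin n) k} (hx : IsStrictUpperTri x)
    (hsd : ∀ a b : Fin n, 1 ≤ (a : ℕ) → (b : ℕ) = (a : ℕ) + 1 → x a b ≠ 0) :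
    ∀ m : ℕ, ∀ a b : Fin n, 1 ≤ (a : ℕ) → (b : ℕ) = (a : ℕ) + m → (x ^ m) a b ≠ 0 := by
  intro m
  induction m with
  | zero =>
    intro a b ha hb
    have : a = b := Fin.ext (by omega)
    subst this
    simp
  | succ m ih =>
    intro a b ha hb
    have hlt : (a : ℕ) + m < n := by have := b.isLt; omega
    set c : Fin n := ⟨(a : ℕ) + m, hlt⟩ with hc
    rw [pow_succ, Matrix.mul_apply]
    rw [Finset.sum_eq_single c]
    · exact mul_ne_zero (ih a c ha rfl) (hsd c b (by simp [hc]; omega) (by simp [hc]; omega))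
    · intro i _ hi
      by_cases h : (i : ℕ) < (a : ℕ) + m
      · rw [pow_entry_zero hx m a i h, zero_mul]
      · have : (b : ℕ) ≤ (i : ℕ) := by
          rcases Nat.lt_or_ge ((a:ℕ)+m) (i:ℕ) with h' | h'
          · omega
          · exfalso; exact hi (Fin.ext (by simp [hc]; omega))
        rw [hx i b this, mul_zero]
    · intro h; exact absurd (Finset.mem_univ c) h

lemma pow_top_row_zero {k : Type*} [Field k] {n : ℕ} (hn : 3 ≤ n)
    {x : Matrix (Fin n) (Fin n) k} (hx : IsStrictUpperTri x)
    (h01 : x ⟨0, by linarith⟩ ⟨1, by linarith⟩ = 0) :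
    ∀ m : ℕ, 1 ≤ m → ∀ b : Fin n, (b : ℕ) < m + 1 → (x ^ m) ⟨0, by linarith⟩ b = 0 := by
  intro m hm
  induction m, hm using Nat.le_induction with
  | base =>
    intro b hb
    rw [pow_one]
    interval_cases h : (b : ℕ)
    · exact hx _ b (by omega)
    · have : b = ⟨1, by linarith⟩ := Fin.ext (by simp [h])
      rw [this]; exact h01
  | succ m hm ih =>
    intro b hb
    rw [pow_succ', Matrix.mul_apply]
    apply Finset.sum_eq_zero
    intro i _
    by_cases hi : (i : ℕ) ≤ 1
    · have hz : x ⟨0, by linarith⟩ i = 0 := by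
        interval_cases h : (i : ℕ)
        · exact hx _ i (by omega)
        · have : i = (⟨1, by linarith⟩ : Fin n) := Fin.ext (by simp [h])
          rw [this]; exact h01
      rw [hz, zero_mul]
    · rw [pow_entry_zero hx m i b (by omega), mul_zero]

lemma pow_pred_zero {k : Type*} [Field k] {n : ℕ} (hn : 3 ≤ n)
    {x : Matrix (Fin n) (Fin n) k} (hx : IsStrictUpperTri x)
    (h01 : x ⟨0, by linarith⟩ ⟨1, by linarith⟩ = 0) :
    x ^ (n - 1) = 0 := by
  ext a b
  rw [Matrix.zero_apply]
  by_cases ha : (a : ℕ) = 0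
  · have : a = (⟨0, by linarith⟩ : Fin n) := Fin.ext ha
    rw [this]
    exact pow_top_row_zero hn hx h01 (n-1) (by omega) b (by have := b.isLt; omega)
  · exact pow_entry_zero hx (n-1) a b (by have := b.isLt; omega)

lemma isUpperTri_iff_blockTriangular {n : ℕ} {k : Type*} [Field k]
    (g : Matrix (Fin n) (Fin n) k) : IsUpperTri g ↔ g.BlockTriangular id := by
  constructor
  · intro h i j hij; exact h i j hij
  · intro h a b hab; exact h (show (id b : Fin n) < id a from Fin.lt_def.mpr hab)

lemma forward_dir {k : Type*} [Field k] {n : ℕ} (hn : 3 ≤ n)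
    (e : Matrix (Fin n) (Fin n) k)
    (he : e = ∑ j ∈ Finset.Icc 2 (n - 1), Emat n k j (j + 1))
    (g : Matrix (Fin n) (Fin n) k) (hg : IsUpperTri g) (hdet : g.det = 1) :
    IsStrictUpperTri (g * e * g⁻¹) ∧ (g * e * g⁻¹) ⟨0, by linarith⟩ ⟨1, by linarith⟩ = 0 ∧
      ∀ a b : Fin n, 1 ≤ (a : ℕ) → (b : ℕ) = (a : ℕ) + 1 → (g * e * g⁻¹) a b ≠ 0 := by
  classical
  have hbt : g.BlockTriangular id := (isUpperTri_iff_blockTriangular g).mp hg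
  have hunit : IsUnit g.det := by rw [hdet]; exact isUnit_one
  have : Invertible g := g.invertibleOfIsUnitDet hunit
  have hinvbt : (g⁻¹).BlockTriangular id := blockTriangular_inv_of_blockTriangular hbt
  have hginv : IsUpperTri g⁻¹ := (isUpperTri_iff_blockTriangular _).mpr hinvbt
  -- diagonal entries nonzero
  have hdiag : ∀ j : Fin n, g j j ≠ 0 := by
    intro j
    have hprod : (∏ i : Fin n, g i i) ≠ 0 := by
      rw [← Matrix.det_of_upperTriangular hbt, hdet]; exact one_ne_zero
    exact Finset.prod_ne_zero_iff.mp hprod j (Finset.mem_univ j)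
  have hinvdiag : ∀ j : Fin n, g j j * g⁻¹ j j = 1 := by
    intro j
    have h1 : (g * g⁻¹) j j = 1 := by rw [Matrix.mul_nonsing_inv g hunit, Matrix.one_apply_eq]
    rw [Matrix.mul_apply] at h1
    rw [← h1]
    symm
    apply Finset.sum_eq_single
    · intro i _ hi
      rcases Nat.lt_or_ge (i : ℕ) (j : ℕ) with h | h
      · rw [hg j i h, zero_mul]
      · have : (j : ℕ) < (i : ℕ) := by
          rcases Nat.eq_or_lt_of_le h with h' | h'
          · exact absurd (Fin.ext h'.symm : i = j) hi
          · exact h'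
        rw [hginv i j this, mul_zero]
    · intro h; exact absurd (Finset.mem_univ j) h
  have key : ∀ a b : Fin n, (g * e * g⁻¹) a b =
      ∑ j : Fin n, (if h : 2 ≤ (j : ℕ) then g a ⟨(j : ℕ) - 1, by omega⟩ else 0) * g⁻¹ j b := by
    intro a b
    rw [Matrix.mul_apply]
    exact Finset.sum_congr rfl fun j _ => by rw [mul_e_entry hn e he]
  refine ⟨?_, ?_, ?_⟩
  · intro a b hab
    rw [key]
    apply Finset.sum_eq_zero
    intro j _
    by_cases h2 : 2 ≤ (j : ℕ)
    · rw [dif_pos h2]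
      rcases Nat.lt_or_ge (b : ℕ) (j : ℕ) with h | h
      · rw [hginv j b h, mul_zero]
      · rw [hg a ⟨(j : ℕ) - 1, by omega⟩ (by simp; omega), zero_mul]
    · rw [dif_neg h2, zero_mul]
  · rw [key]
    apply Finset.sum_eq_zero
    intro j _
    by_cases h2 : 2 ≤ (j : ℕ)
    · rw [dif_pos h2, hginv j ⟨1, by linarith⟩ (by simp; omega), mul_zero]
    · rw [dif_neg h2, zero_mul]
  · intro a b ha hb
    rw [key]
    have hbn : (b : ℕ) < n := b.isLt
    rw [Finset.sum_eq_single b]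
    · rw [dif_pos (by omega)]
      have hab : (⟨(b : ℕ) - 1, by omega⟩ : Fin n) = a := Fin.ext (by simp; omega)
      rw [hab]
      exact mul_ne_zero (hdiag a) (by
        intro h
        have := hinvdiag b
        rw [h, mul_zero] at this
        exact zero_ne_one this)
    · intro j _ hj
      by_cases h2 : 2 ≤ (j : ℕ)
      · rw [dif_pos h2]
        rcases Nat.lt_or_ge (b : ℕ) (j : ℕ) with h | h
        · rw [hginv j b h, mul_zero]
        · have hjb : (j : ℕ) < (b : ℕ) := by
            rcases Nat.eq_or_lt_of_le h with h' | h'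
            · exact absurd (Fin.ext h' : j = b) hj
            · exact h'
          rw [hg a ⟨(j : ℕ) - 1, by omega⟩ (by simp; omega), zero_mul]
      · rw [dif_neg h2, zero_mul]
    · intro h; exact absurd (Finset.mem_univ b) h

lemma backward_dir {k : Type*} [Field k] {n : ℕ} (hn : 3 ≤ n)
    (e : Matrix (Fin n) (Fin n) k)
    (he : e = ∑ j ∈ Finset.Icc 2 (n - 1), Emat n k j (j + 1))
    (x : Matrix (Fin n) (Fin n) k) (hx : IsStrictUpperTri x)
    (h01 : x ⟨0, by linarith⟩ ⟨1, by linarith⟩ = 0)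
    (hsd : ∀ a b : Fin n, 1 ≤ (a : ℕ) → (b : ℕ) = (a : ℕ) + 1 → x a b ≠ 0) :
    ∃ g : Matrix (Fin n) (Fin n) k, IsUpperTri g ∧ g.det = 1 ∧ x = g * e * g⁻¹ := by
  classical
  set last : Fin n := ⟨n - 1, by omega⟩ with hlast
  set z : Fin n := ⟨0, by linarith⟩ with hz
  set D : k := ∏ j ∈ Finset.univ.erase z, (x ^ (n - 1 - (j : ℕ))) j last with hD
  have hDne : D ≠ 0 := by
    rw [hD]
    apply Finset.prod_ne_zero_iff.mpr
    intro j hj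
    have hj0 : (j : ℕ) ≠ 0 := by
      intro h
      exact (Finset.mem_erase.mp hj).1 (Fin.ext (by simp [hz, h]))
    exact pow_superdiag_ne_zero hx hsd (n - 1 - (j : ℕ)) j last (by omega)
      (by have := j.isLt; simp [hlast]; omega)
  set g : Matrix (Fin n) (Fin n) k := Matrix.of fun a b =>
    if (b : ℕ) = 0 then (if (a : ℕ) = 0 then D⁻¹ else 0) else (x ^ (n - 1 - (b : ℕ))) a last
    with hgdef
  have hgapp : ∀ a b : Fin n, g a b =
      if (b : ℕ) = 0 then (if (a : ℕ) = 0 then D⁻¹ else 0)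
      else (x ^ (n - 1 - (b : ℕ))) a last := fun a b => rfl
  have hGup : IsUpperTri g := by
    intro a b hba
    rw [hgapp]
    by_cases hb0 : (b : ℕ) = 0
    · rw [if_pos hb0, if_neg (by omega)]
    · rw [if_neg hb0]
      exact pow_entry_zero hx _ a last (by have := b.isLt; simp [hlast]; omega)
  have hGdiag : ∀ j : Fin n, (j : ℕ) ≠ 0 → g j j = (x ^ (n - 1 - (j : ℕ))) j last := by
    intro j hj
    rw [hgapp, if_neg hj]
  have hdet : g.det = 1 := by
    rw [Matrix.det_of_upperTriangular ((isUpperTri_iff_blockTriangular g).mp hGup)]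
    rw [← Finset.mul_prod_erase Finset.univ _ (Finset.mem_univ z)]
    have h1 : g z z = D⁻¹ := by rw [hgapp]; simp [hz]
    have h2 : ∏ j ∈ Finset.univ.erase z, g j j = D := by
      rw [hD]
      apply Finset.prod_congr rfl
      intro j hj
      apply hGdiag
      intro h
      exact (Finset.mem_erase.mp hj).1 (Fin.ext (by simp [hz, h]))
    rw [h1, h2, inv_mul_cancel₀ hDne]
  have hunit : IsUnit g.det := by rw [hdet]; exact isUnit_one
  have hxg : x * g = g * e := by
    ext a b
    rw [mul_e_entry hn e he, Matrix.mul_apply]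
    by_cases hb0 : (b : ℕ) = 0
    · rw [dif_neg (by omega)]
      apply Finset.sum_eq_zero
      intro i _
      by_cases hi0 : (i : ℕ) = 0
      · rw [hx a i (by omega), zero_mul]
      · rw [hgapp, if_pos hb0, if_neg hi0, mul_zero]
    · have hstep : ∑ i : Fin n, x a i * g i b = (x ^ (n - (b : ℕ))) a last := by
        have h1 : ∀ i : Fin n, x a i * g i b = x a i * (x ^ (n - 1 - (b : ℕ))) i last := by
          intro i; rw [hgapp, if_neg hb0]
        rw [Finset.sum_congr rfl fun i _ => h1 i, ← Matrix.mul_apply, ← pow_succ']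
        have hnb : n - 1 - (b : ℕ) + 1 = n - (b : ℕ) := by have := b.isLt; omega
        rw [hnb]
      rw [hstep]
      by_cases hb1 : (b : ℕ) = 1
      · rw [dif_neg (by omega), hb1, pow_pred_zero hn hx h01, Matrix.zero_apply]
      · have hb2 : 2 ≤ (b : ℕ) := by omega
        rw [dif_pos hb2, hgapp,
          if_neg (show ¬(((⟨(b : ℕ) - 1, by omega⟩ : Fin n)) : ℕ) = 0 by simp; omega)]
        show (x ^ (n - (b : ℕ))) a last =
          (x ^ (n - 1 - (((⟨(b : ℕ) - 1, by omega⟩ : Fin n)) : ℕ))) a last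
        have hcoe : (((⟨(b : ℕ) - 1, by omega⟩ : Fin n)) : ℕ) = (b : ℕ) - 1 := rfl
        rw [hcoe]
        have heq : n - 1 - ((b : ℕ) - 1) = n - (b : ℕ) := by omega
        rw [heq]
  refine ⟨g, hGup, hdet, ?_⟩
  rw [← hxg]
  exact (Matrix.mul_nonsing_inv_cancel_right g x hunit).symm

/-- For `n ≥ 3` and `e = Σ_{j=2}^{n-1} E_{j,j+1}`, the `B`-orbit of `e` is exactly the set
of strictly upper triangular matrices `x` with `x_{1,2} = 0` and `x_{j,j+1} ≠ 0` for
`2 ≤ j ≤ n-1` (all other entries above the diagonal being arbitrary). -/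
theorem Borbit_of_subregular_first_node {k : Type*} [Field k] [IsAlgClosed k] {n : ℕ}
    (hn : 3 ≤ n) (e : Matrix (Fin n) (Fin n) k)
    (he : e = ∑ j ∈ Finset.Icc 2 (n - 1), Emat n k j (j + 1)) :
    Borbit e = { x | IsStrictUpperTri x ∧ x ⟨0, by omega⟩ ⟨1, by omega⟩ = 0 ∧
      ∀ a b : Fin n, 1 ≤ (a : ℕ) → (b : ℕ) = (a : ℕ) + 1 → x a b ≠ 0 } := by
  ext x
  constructor
  · rintro ⟨g, hg, hdet, rfl⟩
    exact forward_dir hn e he g hg hdet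
  · rintro ⟨hx, h01, hsd⟩
    exact backward_dir hn e he x hx h01 hsd
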